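/- arXiv:2103.04269 — 6 statements merged into one kernel-verified Lean document; each statement's English description precedes it below -/
import Mathlib

section
/- Let P and P' be finite posets, α : P' ⇀ P an order-preserving partial map, M a P-graded module, and M' a P'-graded module over a ring R. A module homomorphism h : M → M' is α-filtered if and only if h(M_L) ⊆ M'_{(α⁻¹(L))^≤} for every down set L of P, where α⁻¹(L) := {p' ∈ dom α : α(p') ∈ L} and S^≤ denotes the down closure of S in P'. -/
lemma aux_decompose_eq_zero {R M' P' : Type*} [Ring R] [AddCommGroup M'] [Module R M']
    [DecidableEq P'] (𝓜' : P' → Submodule R M') [DirectSum.Decomposition 𝓜']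
    (S : Set P') (i : P') (hi : i ∉ S) {y : M'} (hy : y ∈ (⨆ p ∈ S, 𝓜' p : Submodule R M')) :
    (DirectSum.decompose 𝓜' y i : M') = 0 := by
  rw [iSup_subtype'] at hy
  refine Submodule.iSup_induction (motive := fun y => (DirectSum.decompose 𝓜' y i : M') = 0)
    _ hy ?_ ?_ ?_
  · rintro ⟨p, hp⟩ z hz
    exact DirectSum.decompose_of_mem_ne 𝓜' hz (fun hne => hi (hne ▸ hp))
  · simp
  · intro a b ha hb
    rw [DirectSum.decompose_add]
    simp [DirectSum.add_apply, ha, hb]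

/-- Let `P`, `P'` be finite posets, `M` a `P`-graded module and `M'` a `P'`-graded module
over a ring `R`, and let `α : P' ⇀ P` be an order-preserving partial map (encoded by its
domain `D ⊆ P'` and a function `α`).  A module homomorphism `h : M → M'` is `α`-filtered
(i.e. whenever the component `h_{ij} = π_i ∘ h ∘ ι_j` is nonzero there is `i' ∈ D` with
`i ≤ i'` and `α i' ≤ j`) if and only if for every down set `L ⊆ P` one has
`h(M_L) ⊆ M'_{(α⁻¹ L)^≤}`, where `α⁻¹ L = {p' ∈ D | α p' ∈ L}` and `S^≤` is the
down closure of `S` in `P'`. -/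
theorem stmt_4 {R : Type*} [Ring R]
    {P P' : Type*} [PartialOrder P] [PartialOrder P'] [Fintype P] [Fintype P'] [DecidableEq P] [DecidableEq P']
    {M M' : Type*} [AddCommGroup M] [Module R M] [AddCommGroup M'] [Module R M']
    (𝓜 : P → Submodule R M) (𝓜' : P' → Submodule R M')
    [DirectSum.Decomposition 𝓜] [DirectSum.Decomposition 𝓜']
    (D : Set P') (α : P' → P)
    (hα : ∀ ⦃i j : P'⦄, i ∈ D → j ∈ D → i ≤ j → α i ≤ α j)
    (h : M →ₗ[R] M') :
    (∀ (i : P') (j : P),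
        (∃ x ∈ 𝓜 j, (DirectSum.decompose 𝓜' (h x) i : M') ≠ 0) →
        ∃ i' ∈ D, i ≤ i' ∧ α i' ≤ j) ↔
    (∀ L : Set P, IsLowerSet L →
        ∀ x ∈ (⨆ p ∈ L, 𝓜 p : Submodule R M),
          h x ∈ (⨆ i ∈ {i : P' | ∃ i' ∈ D, α i' ∈ L ∧ i ≤ i'}, 𝓜' i : Submodule R M')) := by
  classical
  constructor
  · intro hf L hL x hx
    rw [iSup_subtype'] at hx
    refine Submodule.iSup_induction
      (motive := fun x => h x ∈ (⨆ i ∈ {i : P' | ∃ i' ∈ D, α i' ∈ L ∧ i ≤ i'}, 𝓜' i : Submodule R M'))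
      _ hx ?_ ?_ ?_
    · rintro ⟨p, hp⟩ z hz
      rw [← DirectSum.sum_support_decompose 𝓜' (h z)]
      refine Submodule.sum_mem _ fun i hi => ?_
      have hne : (DirectSum.decompose 𝓜' (h z) i : M') ≠ 0 := by
        intro h0
        exact (DFinsupp.mem_support_iff.mp hi) (Subtype.ext h0)
      obtain ⟨i', hi'D, hle, hαle⟩ := hf i p ⟨z, hz, hne⟩
      exact Submodule.mem_iSup_of_mem i (Submodule.mem_iSup_of_mem
        ⟨i', hi'D, hL hαle hp, hle⟩ (DirectSum.decompose 𝓜' (h z) i).2)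
    · simp
    · intro a b ha hb
      rw [map_add]; exact Submodule.add_mem _ ha hb
  · rintro hc i j ⟨x, hxj, hne⟩
    set L : Set P := {p | p ≤ j} with hLdef
    have hL : IsLowerSet L := fun a b hba ha => le_trans hba ha
    have hxm : x ∈ (⨆ p ∈ L, 𝓜 p : Submodule R M) :=
      Submodule.mem_iSup_of_mem j (Submodule.mem_iSup_of_mem (le_refl j) hxj)
    have := hc L hL x hxm
    by_contra hni
    exact hne (aux_decompose_eq_zero 𝓜' _ i (by rintro ⟨i', hD, hαL, hle⟩; exact hni ⟨i', hD, hle, hαL⟩) this)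
end

section
/- Let P and P' be finite posets, M a P-graded module, M' a P'-graded module over a ring R, α : P' ⇀ P an order-preserving partial map, and h : M → M' an α-filtered module homomorphism. Then there exist an order-preserving partial map α' : P ⇀ P' and an α'-filtered module homomorphism h' : M' → M satisfying α ∘ α' = id_P, α' ∘ α = id_{P'}, h' ∘ h = id_M, and h ∘ h' = id_{M'} if and only if α is a total order isomorphism from P' onto P and, for every p' ∈ P', the component h_{p' α(p')} : M_{α(p')} → M'_{p'} is a module isomorphism. -/
open DirectSum


lemma aux_sum_univ {P : Type*} [Fintype P] [DecidableEq P]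
    {M σ : Type*} [AddCommMonoid M] [SetLike σ M] [AddSubmonoidClass σ M]
    (𝓜 : P → σ) [DirectSum.Decomposition 𝓜] (x : M) :
    ∑ i : P, (DirectSum.decompose 𝓜 x i : M) = x := by
  classical
  conv_rhs => rw [← DirectSum.sum_support_decompose 𝓜 x]
  exact (Finset.sum_subset (Finset.subset_univ _) (fun i _ hi => by
    rw [DFinsupp.notMem_support_iff.mp hi, ZeroMemClass.coe_zero])).symm

lemma aux_key {R : Type*} [Ring R] {P P' : Type*} [Fintype P] [DecidableEq P] [DecidableEq P']
    {M M' : Type*} [AddCommGroup M] [Module R M] [AddCommGroup M'] [Module R M']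
    (𝓜 : P → Submodule R M) (𝓜' : P' → Submodule R M')
    [DirectSum.Decomposition 𝓜] [DirectSum.Decomposition 𝓜']
    (h : M →ₗ[R] M') (x : M) (i : P') :
    (DirectSum.decompose 𝓜' (h x) i : M')
      = ∑ k : P, (DirectSum.decompose 𝓜' (h (DirectSum.decompose 𝓜 x k : M)) i : M') := by
  conv_lhs => rw [← aux_sum_univ 𝓜 x]
  rw [map_sum, DirectSum.decompose_sum, DFinsupp.finset_sum_apply,
    AddSubmonoidClass.coe_finset_sum]

section Back
variable {R : Type*} [Ring R]
    {P P' : Type*} [PartialOrder P] [PartialOrder P']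
    [Fintype P] [Fintype P'] [DecidableEq P] [DecidableEq P']
    {M M' : Type*} [AddCommGroup M] [Module R M] [AddCommGroup M'] [Module R M']
    (𝓜 : P → Submodule R M) (𝓜' : P' → Submodule R M')
    [DirectSum.Decomposition 𝓜] [DirectSum.Decomposition 𝓜']
    (α : P' → P) (h : M →ₗ[R] M')

-- simplified filtration
lemma back_inj
    (hbij : Function.Bijective α)
    (hrefl : ∀ x y : P', α x ≤ α y → x ≤ y)
    (hf : ∀ (i : P') (j : P) (x : M), x ∈ 𝓜 j →
      (DirectSum.decompose 𝓜' (h x) i : M') ≠ 0 → α i ≤ j)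
    (hcomp : ∀ p' : P', Function.Injective
      (fun x : 𝓜 (α p') => DirectSum.decompose 𝓜' (h (x : M)) p')) :
    Function.Injective h := by
  classical
  have hzero : ∀ x : M, h x = 0 → x = 0 := by
    intro x hx
    by_contra hx0
    have hd : (DirectSum.decompose 𝓜 x) ≠ 0 := by
      intro h0
      apply hx0
      have := congrArg (DirectSum.decompose 𝓜).symm h0
      simpa using this
    obtain ⟨j, hjS, hjmax⟩ : ∃ m ∈ (DirectSum.decompose 𝓜 x).support,
        ∀ y ∈ (DirectSum.decompose 𝓜 x).support, ¬ m < y := by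
      obtain ⟨m, hm⟩ := Finset.exists_maximal
        (Finset.nonempty_iff_ne_empty.mpr (fun he => hd (DFinsupp.support_eq_empty.mp he)))
      exact ⟨m, hm.1, fun y hy hlt => lt_irrefl _ (lt_of_lt_of_le hlt (hm.2 hy hlt.le))⟩
    obtain ⟨p', hp'⟩ := hbij.2 j
    subst hp'
    have hsum : (DirectSum.decompose 𝓜' (h x) p' : M') = 0 := by
      rw [hx]; simp
    rw [aux_key 𝓜 𝓜' h x p'] at hsum
    rw [Finset.sum_eq_single_of_mem (α p') (Finset.mem_univ _)] at hsum
    · -- diagonal term is zero, contradiction with injectivity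
      have hxj : DirectSum.decompose 𝓜 x (α p') ≠ 0 := DFinsupp.mem_support_iff.mp hjS
      have h0 : (fun x : 𝓜 (α p') => DirectSum.decompose 𝓜' (h (x : M)) p')
          (DirectSum.decompose 𝓜 x (α p')) = 0 := by
        ext; simpa using hsum
      have hA0 : (fun x : 𝓜 (α p') => DirectSum.decompose 𝓜' (h (x : M)) p') 0 = 0 := by
        simp
      have := hcomp p' (h0.trans hA0.symm)
      exact hxj (by simpa using this)
    · intro k _ hk
      by_contra hne
      have hxk : (DirectSum.decompose 𝓜 x k : M) ≠ 0 := by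
        intro hz; apply hne; rw [hz]; simp
      have hle : α p' ≤ k := hf p' k _ (SetLike.coe_mem _) hne
      exact hjmax k (DFinsupp.mem_support_iff.mpr (by simpa using hxk))
        (lt_of_le_of_ne hle (Ne.symm hk))
  intro a b hab
  have := hzero (a - b) (by rw [map_sub, hab, sub_self])
  exact sub_eq_zero.mp this

lemma back_surj
    (hmono : ∀ x y : P', x ≤ y → α x ≤ α y)
    (hrefl : ∀ x y : P', α x ≤ α y → x ≤ y)
    (hf : ∀ (i : P') (j : P) (x : M), x ∈ 𝓜 j →
      (DirectSum.decompose 𝓜' (h x) i : M') ≠ 0 → α i ≤ j)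
    (hcomp : ∀ p' : P', Function.Surjective
      (fun x : 𝓜 (α p') => DirectSum.decompose 𝓜' (h (x : M)) p')) :
    Function.Surjective h := by
  classical
  have hsur : ∀ p' : P', ∀ y ∈ 𝓜' p', y ∈ LinearMap.range h := by
    intro p'
    induction p' using WellFoundedLT.induction with
    | _ p' IH =>
      intro y hy
      obtain ⟨x₀, hx₀⟩ := hcomp p' ⟨y, hy⟩
      set r := h ↑x₀ - y with hr
      have hlt : ∀ i : P', (DirectSum.decompose 𝓜' r i : M') ≠ 0 → i < p' := by
        intro i hi
        have hdec : (DirectSum.decompose 𝓜' r i : M')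
            = (DirectSum.decompose 𝓜' (h ↑x₀) i : M') - (DirectSum.decompose 𝓜' y i : M') := by
          rw [hr, DirectSum.decompose_sub]; simp
        rcases eq_or_ne i p' with rfl | hne
        · exfalso
          apply hi
          rw [hdec, DirectSum.decompose_of_mem_same 𝓜' hy]
          have : (DirectSum.decompose 𝓜' (h ↑x₀) i : M') = y := congrArg Subtype.val hx₀
          rw [this, sub_self]
        · have hy0 : (DirectSum.decompose 𝓜' y i : M') = 0 :=
            DirectSum.decompose_of_mem_ne 𝓜' hy (Ne.symm hne)
          rw [hdec, hy0, sub_zero] at hi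
          have := hf i (α p') ↑x₀ (SetLike.coe_mem _) hi
          exact lt_of_le_of_ne (hrefl _ _ this) hne
      have hrmem : r ∈ LinearMap.range h := by
        rw [← aux_sum_univ 𝓜' r]
        refine Submodule.sum_mem _ fun i _ => ?_
        by_cases hz : (DirectSum.decompose 𝓜' r i : M') = 0
        · rw [hz]; exact zero_mem _
        · exact IH i (hlt i hz) _ (SetLike.coe_mem _)
      have : y = h ↑x₀ - r := by rw [hr, sub_sub_cancel]
      rw [this]
      exact sub_mem (LinearMap.mem_range_self h _) hrmem
  intro y
  have : y ∈ LinearMap.range h := by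
    rw [← aux_sum_univ 𝓜' y]
    exact Submodule.sum_mem _ fun i _ => hsur i _ (SetLike.coe_mem _)
  exact this

lemma back_filt
    (hbij : Function.Bijective α)
    (hf : ∀ (i : P') (j : P) (x : M), x ∈ 𝓜 j →
      (DirectSum.decompose 𝓜' (h x) i : M') ≠ 0 → α i ≤ j)
    (hcomp : ∀ p' : P', Function.Injective
      (fun x : 𝓜 (α p') => DirectSum.decompose 𝓜' (h (x : M)) p'))
    (j : P') (y : M') (hy : y ∈ 𝓜' j) (x : M) (hxy : h x = y)
    (i : P) (hi : (DirectSum.decompose 𝓜 x i : M) ≠ 0) : i ≤ α j := by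
  classical
  by_contra hij
  set S := (DirectSum.decompose 𝓜 x).support.filter (fun k => ¬ k ≤ α j) with hS
  have hSne : S.Nonempty :=
    ⟨i, Finset.mem_filter.mpr ⟨DFinsupp.mem_support_iff.mpr (by simpa using hi), hij⟩⟩
  obtain ⟨k, hkS, hkmax⟩ : ∃ m ∈ S, ∀ y ∈ S, ¬ m < y := by
    obtain ⟨m, hm⟩ := Finset.exists_maximal hSne
    exact ⟨m, hm.1, fun y hy hlt => lt_irrefl _ (lt_of_lt_of_le hlt (hm.2 hy hlt.le))⟩
  obtain ⟨hksupp, hkle⟩ := Finset.mem_filter.mp hkS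
  obtain ⟨q, hq⟩ := hbij.2 k
  subst hq
  have hdiag : (DirectSum.decompose 𝓜' (h x) q : M')
      = (DirectSum.decompose 𝓜' (h (DirectSum.decompose 𝓜 x (α q) : M)) q : M') := by
    rw [aux_key 𝓜 𝓜' h x q]
    refine Finset.sum_eq_single_of_mem (α q) (Finset.mem_univ _) ?_
    intro m _ hm
    by_contra hne
    have hxm : (DirectSum.decompose 𝓜 x m : M) ≠ 0 := by
      intro hz; apply hne; rw [hz]; simp
    have hle : α q ≤ m := hf q m _ (SetLike.coe_mem _) hne
    have hlt : α q < m := lt_of_le_of_ne hle (Ne.symm hm)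
    have hmS : m ∈ S := Finset.mem_filter.mpr
      ⟨DFinsupp.mem_support_iff.mpr (by simpa using hxm),
       fun hmle => hkle (le_trans hle hmle)⟩
    exact hkmax m hmS hlt
  have hne0 : (DirectSum.decompose 𝓜' (h x) q : M') ≠ 0 := by
    rw [hdiag]
    intro h0
    have hA0 : (fun z : 𝓜 (α q) => DirectSum.decompose 𝓜' (h (z : M)) q)
        (DirectSum.decompose 𝓜 x (α q))
        = (fun z : 𝓜 (α q) => DirectSum.decompose 𝓜' (h (z : M)) q) 0 := by
      ext
      simpa using h0
    have := hcomp q hA0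
    exact DFinsupp.mem_support_iff.mp hksupp (by simpa using this)
  rw [hxy] at hne0
  have : q = j := by
    by_contra hqj
    exact hne0 (DirectSum.decompose_of_mem_ne 𝓜' hy (Ne.symm hqj))
  subst this
  exact hkle le_rfl
end Back



/-- Let `P`, `P'` be finite posets, `M` a `P`-graded and `M'` a `P'`-graded module over a
ring `R`, `α : P' ⇀ P` an order-preserving partial map (encoded by its domain `D ⊆ P'` and
a function `α`), and `h : M → M'` an `α`-filtered module homomorphism.  Then there exist an
order-preserving partial map `α' : P ⇀ P'` (encoded by `(E, β)`) and an `α'`-filtered module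
homomorphism `h' : M' → M` with `α ∘ α' = id_P`, `α' ∘ α = id_{P'}`, `h' ∘ h = id_M` and
`h ∘ h' = id_{M'}` if and only if `α` is a total order isomorphism from `P'` onto `P` and,
for every `p' ∈ P'`, the component `h_{p' α(p')} : M_{α(p')} → M'_{p'}` is a module
isomorphism. -/
theorem stmt_5 {R : Type*} [Ring R]
    {P P' : Type*} [PartialOrder P] [PartialOrder P']
    [Fintype P] [Fintype P'] [DecidableEq P] [DecidableEq P']
    {M M' : Type*} [AddCommGroup M] [Module R M] [AddCommGroup M'] [Module R M']
    (𝓜 : P → Submodule R M) (𝓜' : P' → Submodule R M')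
    [DirectSum.Decomposition 𝓜] [DirectSum.Decomposition 𝓜']
    (D : Set P') (α : P' → P)
    (hα : ∀ ⦃i j : P'⦄, i ∈ D → j ∈ D → i ≤ j → α i ≤ α j)
    (h : M →ₗ[R] M')
    (hfilt : ∀ (i : P') (j : P),
        (∃ x ∈ 𝓜 j, (DirectSum.decompose 𝓜' (h x) i : M') ≠ 0) →
        ∃ i' ∈ D, i ≤ i' ∧ α i' ≤ j) :
    (∃ (E : Set P) (β : P → P') (h' : M' →ₗ[R] M),
        (∀ ⦃i j : P⦄, i ∈ E → j ∈ E → i ≤ j → β i ≤ β j) ∧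
        (∀ (i : P) (j : P'),
            (∃ x ∈ 𝓜' j, (DirectSum.decompose 𝓜 (h' x) i : M) ≠ 0) →
            ∃ i' ∈ E, i ≤ i' ∧ β i' ≤ j) ∧
        (∀ p : P, p ∈ E ∧ β p ∈ D ∧ α (β p) = p) ∧
        (∀ p' : P', p' ∈ D ∧ α p' ∈ E ∧ β (α p') = p') ∧
        h' ∘ₗ h = LinearMap.id ∧ h ∘ₗ h' = LinearMap.id) ↔
    (D = Set.univ ∧ Function.Bijective α ∧
        (∀ x y : P', x ≤ y → α x ≤ α y) ∧ (∀ x y : P', α x ≤ α y → x ≤ y) ∧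
        ∀ p' : P', Function.Bijective
          (fun x : 𝓜 (α p') => DirectSum.decompose 𝓜' (h (x : M)) p')) := by
  constructor
  · rintro ⟨E, β, h', hβ, hfilt', hEP, hDP, hinv1, hinv2⟩
    have hE : ∀ p, p ∈ E := fun p => (hEP p).1
    have hDmem : ∀ p', p' ∈ D := fun p' => (hDP p').1
    have hβα : ∀ p', β (α p') = p' := fun p' => (hDP p').2.2
    have hαβ : ∀ p, α (β p) = p := fun p => (hEP p).2.2
    have hmono : ∀ x y : P', x ≤ y → α x ≤ α y := fun x y hxy => hα (hDmem x) (hDmem y) hxy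
    have hβmono : ∀ x y : P, x ≤ y → β x ≤ β y := fun x y hxy => hβ (hE x) (hE y) hxy
    have hrefl : ∀ x y : P', α x ≤ α y → x ≤ y := fun x y hxy => by
      have := hβmono _ _ hxy; rwa [hβα, hβα] at this
    have hbij : Function.Bijective α :=
      ⟨fun a b hab => by rw [← hβα a, hab, hβα], fun p => ⟨β p, hαβ p⟩⟩
    have hid1 : ∀ x : M, h' (h x) = x := fun x => by
      have := LinearMap.congr_fun hinv1 x; simpa using this
    have hid2 : ∀ y : M', h (h' y) = y := fun y => by
      have := LinearMap.congr_fun hinv2 y; simpa using this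
    refine ⟨Set.eq_univ_of_forall hDmem, hbij, hmono, hrefl, ?_⟩
    intro p'
    rw [Function.bijective_iff_has_inverse]
    refine ⟨fun y => DirectSum.decompose 𝓜 (h' ↑y) (α p'), ?_, ?_⟩
    · intro x
      apply Subtype.ext
      have e1 : (DirectSum.decompose 𝓜 (h' (h ↑x)) (α p') : M) = ↑x := by
        rw [hid1]; exact DirectSum.decompose_of_mem_same 𝓜 x.2
      have vanish : ∀ i ∈ Finset.univ, i ≠ p' →
          (DirectSum.decompose 𝓜 (h' ((DirectSum.decompose 𝓜' (h ↑x) i : M'))) (α p') : M)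
            = 0 := by
        intro i _ hip'
        by_cases hz : (DirectSum.decompose 𝓜' (h ↑x) i : M') = 0
        · rw [hz]; simp
        · by_contra hne
          obtain ⟨k, hkE, h1, h2⟩ := hfilt' (α p') i ⟨_, SetLike.coe_mem _, hne⟩
          have hp'lei : p' ≤ i := by
            have := hβ (hE (α p')) hkE h1
            rw [hβα] at this
            exact le_trans this h2
          obtain ⟨i', hi'D, hii', h3⟩ := hfilt i (α p') ⟨↑x, x.2, hz⟩
          exact hip' (le_antisymm (le_trans hii' (hrefl _ _ h3)) hp'lei)
      calc (DirectSum.decompose 𝓜 (h' ↑(DirectSum.decompose 𝓜' (h ↑x) p')) (α p') : M)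
          = ∑ i : P',
            (DirectSum.decompose 𝓜 (h' ↑(DirectSum.decompose 𝓜' (h ↑x) i)) (α p') : M) :=
            (Finset.sum_eq_single_of_mem p' (Finset.mem_univ _) vanish).symm
        _ = (DirectSum.decompose 𝓜 (h' (h ↑x)) (α p') : M) :=
            (aux_key 𝓜' 𝓜 h' (h ↑x) (α p')).symm
        _ = ↑x := e1
    · intro y
      apply Subtype.ext
      have e1 : (DirectSum.decompose 𝓜' (h (h' ↑y)) p' : M') = ↑y := by
        rw [hid2]; exact DirectSum.decompose_of_mem_same 𝓜' y.2
      have vanish : ∀ k ∈ Finset.univ, k ≠ α p' →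
          (DirectSum.decompose 𝓜' (h ((DirectSum.decompose 𝓜 (h' ↑y) k : M))) p' : M')
            = 0 := by
        intro k _ hk
        by_cases hz : (DirectSum.decompose 𝓜 (h' ↑y) k : M) = 0
        · rw [hz]; simp
        · by_contra hne
          obtain ⟨i', hi'D, h1, h2⟩ := hfilt p' k ⟨_, SetLike.coe_mem _, hne⟩
          have hge : α p' ≤ k := le_trans (hmono _ _ h1) h2
          obtain ⟨k', hk'E, h3, h4⟩ := hfilt' k p' ⟨↑y, y.2, hz⟩
          have hle : k ≤ α p' := by
            have h5 := hmono _ _ h4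
            rw [hαβ] at h5
            exact le_trans h3 h5
          exact hk (le_antisymm hle hge)
      calc (DirectSum.decompose 𝓜' (h ↑(DirectSum.decompose 𝓜 (h' ↑y) (α p'))) p' : M')
          = ∑ k : P,
            (DirectSum.decompose 𝓜' (h ↑(DirectSum.decompose 𝓜 (h' ↑y) k)) p' : M') :=
            (Finset.sum_eq_single_of_mem (α p') (Finset.mem_univ _) vanish).symm
        _ = (DirectSum.decompose 𝓜' (h (h' ↑y)) p' : M') :=
            (aux_key 𝓜 𝓜' h (h' ↑y) p').symm
        _ = ↑y := e1
  · rintro ⟨hD, hbij, hmono, hrefl, hcomp⟩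
    subst hD
    have hf : ∀ (i : P') (j : P) (x : M), x ∈ 𝓜 j →
        (DirectSum.decompose 𝓜' (h x) i : M') ≠ 0 → α i ≤ j := by
      intro i j x hx hne
      obtain ⟨i', -, hle, hle'⟩ := hfilt i j ⟨x, hx, hne⟩
      exact le_trans (hmono _ _ hle) hle'
    have hbj : Function.Bijective h :=
      ⟨back_inj 𝓜 𝓜' α h hbij hrefl hf (fun p' => (hcomp p').1),
       back_surj 𝓜 𝓜' α h hmono hrefl hf (fun p' => (hcomp p').2)⟩
    let eα : P' ≃ P := Equiv.ofBijective α hbij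
    let Eqv := LinearEquiv.ofBijective h hbj
    have hαβ : ∀ p, α (eα.symm p) = p := fun p => eα.apply_symm_apply p
    have hβα : ∀ p', eα.symm (α p') = p' := fun p' => eα.symm_apply_apply p'
    have hid2 : ∀ y : M', h (Eqv.symm y) = y := fun y => by
      have := Eqv.apply_symm_apply y
      rwa [LinearEquiv.ofBijective_apply] at this
    refine ⟨Set.univ, fun p => eα.symm p, Eqv.symm.toLinearMap, ?_, ?_, ?_, ?_, ?_, ?_⟩
    · intro i j _ _ hij
      exact hrefl _ _ (by rw [hαβ, hαβ]; exact hij)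
    · rintro i j ⟨y, hy, hne⟩
      refine ⟨i, Set.mem_univ _, le_rfl, ?_⟩
      refine hrefl _ _ ?_
      rw [hαβ]
      exact back_filt 𝓜 𝓜' α h hbij hf (fun p' => (hcomp p').1) j y hy (Eqv.symm y)
        (hid2 y) i hne
    · exact fun p => ⟨Set.mem_univ _, Set.mem_univ _, hαβ p⟩
    · exact fun p' => ⟨Set.mem_univ _, Set.mem_univ _, hβα p'⟩
    · ext x
      simp only [LinearMap.comp_apply, LinearMap.id_apply, LinearEquiv.coe_coe]
      have : h x = Eqv x := (LinearEquiv.ofBijective_apply _ _).symm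
      rw [this, Eqv.symm_apply_apply]
    · ext y
      simp only [LinearMap.comp_apply, LinearMap.id_apply, LinearEquiv.coe_coe]
      exact hid2 y
end

section
/- Let X be a finite topological space and let ℰ be an acyclic partition of X, with inherent partial order ≤_ℰ. If 𝒟 ⊆ ℰ is a down set with respect to ≤_ℰ, then the union |𝒟| = ∪𝒟 is closed in X. If 𝒟 ⊆ ℰ is convex with respect to ≤_ℰ, then |𝒟| is locally closed in X. -/
/-- The relation `E ≼ E'` on a partition `ℰ` of a topological space:
`E ∩ cl E' ≠ ∅` (with both sets members of `ℰ`). -/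
def partRel {X : Type*} [TopologicalSpace X] (ℰ : Set (Set X)) : Set X → Set X → Prop :=
  fun E E' => E ∈ ℰ ∧ E' ∈ ℰ ∧ (E ∩ closure E').Nonempty

/-- Let `ℰ` be an acyclic partition of a finite topological space `X` (a partition into
locally closed sets whose relation `≼` extends to a partial order, equivalently whose
reflexive-transitive closure `≤_ℰ` is antisymmetric), and let `𝒟 ⊆ ℰ`.
(i) If `𝒟` is a down set with respect to the inherent partial order `≤_ℰ`, then `∪𝒟`
is closed in `X`.  (ii) If `𝒟` is convex with respect to `≤_ℰ`, then `∪𝒟` is locally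
closed in `X`. -/
theorem stmt_13 {X : Type*} [TopologicalSpace X] [Finite X]
    (ℰ : Set (Set X))
    (hne : ∀ E ∈ ℰ, E.Nonempty)
    (hdisj : ∀ E ∈ ℰ, ∀ F ∈ ℰ, E ≠ F → E ∩ F = ∅)
    (hcover : ⋃₀ ℰ = Set.univ)
    (hlc : ∀ E ∈ ℰ, ∀ x ∈ E, ∃ U ∈ nhds x, IsClosed {y : U | (y : X) ∈ E})
    (hacyclic : ∀ E ∈ ℰ, ∀ F ∈ ℰ,
      Relation.ReflTransGen (partRel ℰ) E F → Relation.ReflTransGen (partRel ℰ) F E →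
      E = F)
    (𝒟 : Set (Set X)) (h𝒟 : 𝒟 ⊆ ℰ) :
    ((∀ F ∈ 𝒟, ∀ E ∈ ℰ, Relation.ReflTransGen (partRel ℰ) E F → E ∈ 𝒟) →
      IsClosed (⋃₀ 𝒟)) ∧
    ((∀ D ∈ 𝒟, ∀ F ∈ 𝒟, ∀ E ∈ ℰ,
        Relation.ReflTransGen (partRel ℰ) D E → Relation.ReflTransGen (partRel ℰ) E F →
        E ∈ 𝒟) →
      ∀ x ∈ ⋃₀ 𝒟, ∃ U ∈ nhds x, IsClosed {y : U | (y : X) ∈ ⋃₀ 𝒟}) := by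

  have key : ∀ 𝒜 : Set (Set X), 𝒜 ⊆ ℰ →
      (∀ F ∈ 𝒜, ∀ E ∈ ℰ, Relation.ReflTransGen (partRel ℰ) E F → E ∈ 𝒜) →
      IsClosed (⋃₀ 𝒜) := by
    intro 𝒜 hsub hdown
    apply isClosed_of_closure_subset
    rw [(Set.toFinite 𝒜).closure_sUnion]
    rintro x hx
    simp only [Set.mem_iUnion] at hx
    obtain ⟨E, hE𝒜, hxE⟩ := hx
    have hxX : x ∈ ⋃₀ ℰ := by rw [hcover]; trivial
    obtain ⟨F, hFℰ, hxF⟩ := hxX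
    have hrel : partRel ℰ F E := ⟨hFℰ, hsub hE𝒜, ⟨x, hxF, hxE⟩⟩
    exact ⟨F, hdown E hE𝒜 F hFℰ (Relation.ReflTransGen.single hrel), hxF⟩
  constructor
  · intro h; exact key 𝒟 h𝒟 h
  · intro hconv x hx
    set 𝒟d : Set (Set X) :=
      {E | E ∈ ℰ ∧ ∃ F ∈ 𝒟, Relation.ReflTransGen (partRel ℰ) E F} with h𝒟d
    set 𝒟c : Set (Set X) := {E | E ∈ 𝒟d ∧ E ∉ 𝒟} with h𝒟c
    have hdsub : 𝒟d ⊆ ℰ := fun E hE => hE.1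
    have hcsub : 𝒟c ⊆ ℰ := fun E hE => hE.1.1
    have hddown : ∀ F ∈ 𝒟d, ∀ E ∈ ℰ, Relation.ReflTransGen (partRel ℰ) E F → E ∈ 𝒟d := by
      rintro F ⟨hFℰ, G, hG𝒟, hFG⟩ E hEℰ hEF
      exact ⟨hEℰ, G, hG𝒟, hEF.trans hFG⟩
    have hcdown : ∀ F ∈ 𝒟c, ∀ E ∈ ℰ, Relation.ReflTransGen (partRel ℰ) E F → E ∈ 𝒟c := by
      rintro F ⟨hF𝒟d, hF𝒟⟩ E hEℰ hEF
      refine ⟨hddown F hF𝒟d E hEℰ hEF, ?_⟩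
      intro hE𝒟
      obtain ⟨hFℰ, G, hG𝒟, hFG⟩ := hF𝒟d
      exact hF𝒟 (hconv E hE𝒟 G hG𝒟 F hFℰ hEF hFG)
    have hclosed_d : IsClosed (⋃₀ 𝒟d) := key 𝒟d hdsub hddown
    have hclosed_c : IsClosed (⋃₀ 𝒟c) := key 𝒟c hcsub hcdown
    obtain ⟨D, hD𝒟, hxD⟩ := hx
    have hxU : x ∈ (⋃₀ 𝒟c)ᶜ := by
      rintro ⟨E, hE𝒟c, hxE⟩
      have hne' : E ≠ D := fun h => hE𝒟c.2 (h ▸ hD𝒟)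
      have := hdisj E (hcsub hE𝒟c) D (h𝒟 hD𝒟) hne'
      exact absurd (Set.mem_inter hxE hxD) (by rw [this]; exact id)
    refine ⟨(⋃₀ 𝒟c)ᶜ, hclosed_c.isOpen_compl.mem_nhds hxU, ?_⟩
    have hset : {y : ((⋃₀ 𝒟c)ᶜ : Set X) | (y : X) ∈ ⋃₀ 𝒟}
        = (Subtype.val) ⁻¹' (⋃₀ 𝒟d) := by
      ext y
      constructor
      · rintro ⟨E, hE𝒟, hyE⟩
        exact ⟨E, ⟨h𝒟 hE𝒟, E, hE𝒟, Relation.ReflTransGen.refl⟩, hyE⟩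
      · rintro ⟨E, hE𝒟d, hyE⟩
        by_cases hE : E ∈ 𝒟
        · exact ⟨E, hE, hyE⟩
        · exact absurd ⟨E, ⟨hE𝒟d, hE⟩, hyE⟩ y.2
    rw [hset]
    exact hclosed_d.preimage continuous_subtype_val
end

section
/- Let (X,κ) be a regular Lefschetz complex over a ring R, let 𝒱 be a combinatorial vector field on X, and let Φ = id + ∂^κΓ + Γ∂^κ be the associated combinatorial flow. Then for every x ∈ X, ⟨x, Φx⟩ = 1 if x is a critical cell of 𝒱, and ⟨x, Φx⟩ = 0 otherwise. -/
section Lefschetz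

variable {R : Type*} [Ring R] {X : Type*} [Fintype X] [DecidableEq X]

/-- The linear endomorphism of the free module `X → R` determined by a "matrix"
`m : X → X → R`, sending a generator `x` to `∑ y, m x y • y`.  For `m = κ` this is the
boundary operator `∂^κ` of a Lefschetz complex `(X, κ)`. -/
noncomputable def lmat (m : X → X → R) : (X → R) →ₗ[R] (X → R) where
  toFun c := fun y => ∑ x, c x * m x y
  map_add' c c' := by
    funext y
    simp [add_mul, Finset.sum_add_distrib]
  map_smul' r c := by
    funext y
    simp [Finset.mul_sum, mul_assoc]

open Classical in
/-- The degree `+1` homomorphism `Γ` associated with a combinatorial vector field,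
encoded by the pairing involution `V` : on generators, `Γ x = -κ(x⁺,x⁻)⁻¹ x⁺` if `x` is
a tail (`x = x⁻ ≠ x⁺ = V x`), and `Γ x = 0` otherwise. -/
noncomputable def gammaMap (κ : X → X → R) (V : X → X) : (X → R) →ₗ[R] (X → R) :=
  lmat fun x y => if V x ≠ x ∧ κ (V x) x ≠ 0 ∧ y = V x then -(Ring.inverse (κ (V x) x)) else 0

/-- The combinatorial flow `Φ = id + ∂^κ ∘ Γ + Γ ∘ ∂^κ` of a combinatorial vector field. -/
noncomputable def flowMap (κ : X → X → R) (V : X → X) : (X → R) →ₗ[R] (X → R) :=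
  LinearMap.id + lmat κ ∘ₗ gammaMap κ V + gammaMap κ V ∘ₗ lmat κ

/-- Let `(X,κ)` be a regular Lefschetz complex and `𝒱` a combinatorial vector field on
`X`, encoded by the involution `V` pairing each cell with its partner (`V x = x` for a
critical cell, and the vector `{x, V x}` has one cell a facet of the other otherwise).
Then for the combinatorial flow `Φ` one has `⟨x, Φ x⟩ = 1` if `x` is critical and
`⟨x, Φ x⟩ = 0` otherwise. -/
theorem stmt_17 (dim : X → ℕ) (κ : X → X → R)
    (hκ1 : ∀ x y : X, κ x y ≠ 0 → dim x = dim y + 1)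
    (hκ2 : ∀ x z : X, ∑ y, κ x y * κ y z = 0)
    (hreg : ∀ x y : X, κ x y ≠ 0 → IsUnit (κ x y))
    (V : X → X) (hinv : ∀ x, V (V x) = x)
    (hvec : ∀ x : X, V x ≠ x → κ (V x) x ≠ 0 ∨ κ x (V x) ≠ 0) :
    ∀ x : X, flowMap κ V (Pi.single x 1) x = if V x = x then 1 else 0 := by
  classical
  intro x
  set g : X → X → R := fun z y =>
    if V z ≠ z ∧ κ (V z) z ≠ 0 ∧ y = V z then -(Ring.inverse (κ (V z) z)) else 0 with hg
  have hδ : ∀ (m : X → X → R) (y : X), lmat m (Pi.single x 1) y = m x y := by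
    intro m y
    simp only [lmat, LinearMap.coe_mk, AddHom.coe_mk]
    rw [Finset.sum_eq_single x]
    · simp
    · intro b _ hb; simp [Pi.single_apply, hb]
    · simp
  have key : flowMap κ V (Pi.single x 1) x
      = 1 + (∑ z, g x z * κ z x) + (∑ z, κ x z * g z x) := by
    have h1 : (lmat κ ∘ₗ gammaMap κ V) (Pi.single x 1) x = ∑ z, g x z * κ z x := by
      show (∑ z, (lmat (R := R) g (Pi.single x 1)) z * κ z x) = _
      exact Finset.sum_congr rfl fun z _ => by rw [hδ]
    have h2 : (gammaMap κ V ∘ₗ lmat κ) (Pi.single x 1) x = ∑ z, κ x z * g z x := by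
      show (∑ z, (lmat (R := R) κ (Pi.single x 1)) z * g z x) = _
      exact Finset.sum_congr rfl fun z _ => by rw [hδ]
    simp only [flowMap, LinearMap.add_apply, Pi.add_apply, LinearMap.id_apply,
      Pi.single_eq_same, h1, h2]
  rw [key]
  by_cases h : V x = x
  · rw [if_pos h]
    have s1 : (∑ z, g x z * κ z x) = 0 := by
      apply Finset.sum_eq_zero; intro z _
      simp [hg, h]
    have s2 : (∑ z, κ x z * g z x) = 0 := by
      apply Finset.sum_eq_zero; intro z _
      have : g z x = 0 := by
        simp only [hg]
        rw [if_neg]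
        rintro ⟨hne, -, hx⟩
        apply hne
        have : z = V x := by rw [hx, hinv]
        rw [this, h] at hx ⊢
        rw [← hx]
      rw [this, mul_zero]
    rw [s1, s2, add_zero, add_zero]
  · rw [if_neg h]
    have s1 : (∑ z, g x z * κ z x) = if κ (V x) x ≠ 0 then -1 else 0 := by
      rw [Finset.sum_eq_single (V x)]
      · by_cases hb : κ (V x) x ≠ 0
        · rw [if_pos hb]
          have hgx : g x (V x) = -(Ring.inverse (κ (V x) x)) := by simp [hg, h, hb]
          rw [hgx, neg_mul, Ring.inverse_mul_cancel _ (hreg _ _ hb)]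
        · rw [if_neg hb]
          push_neg at hb
          rw [hb, mul_zero]
      · intro b _ hb
        simp only [hg]
        rw [if_neg, zero_mul]
        rintro ⟨-, -, rfl⟩; exact hb rfl
      · simp
    have s2 : (∑ z, κ x z * g z x) = if κ x (V x) ≠ 0 then -1 else 0 := by
      rw [Finset.sum_eq_single (V x)]
      · by_cases hb : κ x (V x) ≠ 0
        · rw [if_pos hb]
          have hxx : x ≠ V x := fun hh => h hh.symm
          have hgv : g (V x) x = -(Ring.inverse (κ x (V x))) := by
            simp [hg, hinv x, hb, hxx]
          rw [hgv, mul_neg, Ring.mul_inverse_cancel _ (hreg _ _ hb)]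
        · rw [if_neg hb]
          push_neg at hb
          rw [hb, zero_mul]
      · intro b _ hb
        simp only [hg]
        rw [if_neg, mul_zero]
        rintro ⟨-, -, hx⟩
        apply hb
        rw [hx, hinv]
      · simp
    rw [s1, s2]
    rcases hvec x h with hb | hb
    · rw [if_pos hb]
      have hb2 : ¬ κ x (V x) ≠ 0 := by
        intro hb2
        have d1 := hκ1 _ _ hb
        have d2 := hκ1 _ _ hb2
        omega
      rw [if_neg hb2]
      norm_num
    · rw [if_pos hb]
      have hb2 : ¬ κ (V x) x ≠ 0 := by
        intro hb2
        have d1 := hκ1 _ _ hb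
        have d2 := hκ1 _ _ hb2
        omega
      rw [if_neg hb2]
      norm_num


end Lefschetz
end

section
/- Let (X,κ) be a regular Lefschetz complex over a ring R, let 𝒱 be a combinatorial vector field on X with set of heads X⁺, and let Φ be the associated combinatorial flow. Then Φ(C(X⁺)) ⊆ C(X⁺), where C(X⁺) is the submodule of C(X) spanned by X⁺. -/
section Lefschetz

variable {R : Type*} [Ring R] {X : Type*} [Fintype X] [DecidableEq X]

/-- Let `(X,κ)` be a regular Lefschetz complex and `𝒱` a combinatorial vector field on
`X`, encoded by the involution `V`.  The set of heads is `X⁺ = {x | x = x⁺ ≠ x⁻}`, i.e.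
`V x ≠ x ∧ κ x (V x) ≠ 0`.  Then the combinatorial flow `Φ` maps `C(X⁺)` into itself:
every chain supported on heads is sent to a chain supported on heads. -/
theorem stmt_18 (dim : X → ℕ) (κ : X → X → R)
    (hκ1 : ∀ x y : X, κ x y ≠ 0 → dim x = dim y + 1)
    (hκ2 : ∀ x z : X, ∑ y, κ x y * κ y z = 0)
    (hreg : ∀ x y : X, κ x y ≠ 0 → IsUnit (κ x y))
    (V : X → X) (hinv : ∀ x, V (V x) = x)
    (hvec : ∀ x : X, V x ≠ x → κ (V x) x ≠ 0 ∨ κ x (V x) ≠ 0) :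
    ∀ c : X → R, (∀ x : X, c x ≠ 0 → V x ≠ x ∧ κ x (V x) ≠ 0) →
      ∀ y : X, flowMap κ V c y ≠ 0 → V y ≠ y ∧ κ y (V y) ≠ 0 := by
  intro c hc y hy
  have key : ∀ a b : X, κ a b ≠ 0 → κ b a = 0 := by
    intro a b hab
    by_contra h
    have h1 := hκ1 a b hab
    have h2 := hκ1 b a h
    omega
  have hΓimg : ∀ d : X → R, ∀ z : X, gammaMap κ V d z ≠ 0 → V z ≠ z ∧ κ z (V z) ≠ 0 := by
    intro d z h
    simp only [gammaMap, lmat, LinearMap.coe_mk, AddHom.coe_mk] at h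
    obtain ⟨x, -, hx⟩ := Finset.exists_ne_zero_of_sum_ne_zero h
    by_cases hcond : V x ≠ x ∧ κ (V x) x ≠ 0 ∧ z = V x
    · obtain ⟨h1, h2, h3⟩ := hcond
      subst h3
      rw [hinv]
      exact ⟨fun he => h1 he.symm, h2⟩
    · rw [if_neg hcond, mul_zero] at hx
      exact absurd rfl hx
  have hΓc : gammaMap κ V c = 0 := by
    ext z
    simp only [gammaMap, lmat, LinearMap.coe_mk, AddHom.coe_mk, Pi.zero_apply]
    apply Finset.sum_eq_zero
    intro x _
    by_cases hcx : c x = 0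
    · rw [hcx, zero_mul]
    · obtain ⟨h1, h2⟩ := hc x hcx
      rw [if_neg, mul_zero]
      rintro ⟨-, h3, -⟩
      exact h3 (key x (V x) h2)
  have hflow : flowMap κ V c y = c y + gammaMap κ V (lmat κ c) y := by
    simp only [flowMap, LinearMap.add_apply, LinearMap.comp_apply, LinearMap.id_apply, hΓc,
      map_zero]
    simp
  rw [hflow] at hy
  by_cases hcy : c y = 0
  · refine hΓimg (lmat κ c) y ?_
    intro h0
    rw [hcy, h0, add_zero] at hy
    exact hy rfl
  · exact hc y hcy


end Lefschetz
end

section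
/- Let (X,κ) be a regular Lefschetz complex over a ring R and let 𝒱 be a gradient combinatorial vector field on X, with combinatorial flow Φ, set of critical cells X^c and set of heads X⁺. Then for every critical cell x ∈ X^c and every n ≥ 1 one has Φⁿx = x + rₙ for a chain rₙ whose support satisfies |rₙ| ⊆ X⁺ ∩ |[x]^{<_𝒱}|. Consequently, for every n ≥ 1 the restriction of Φⁿ to the submodule C(X^c) spanned by X^c is injective. -/
set_option linter.unusedSectionVars false
set_option linter.unusedVariables false



section Lefschetz

variable {R : Type*} [Ring R] {X : Type*} [Fintype X] [DecidableEq X]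

/-- The relation `≤_κ` (reflexive-transitive closure of the facet relation). -/
def kle (κ : X → X → R) : X → X → Prop :=
  Relation.ReflTransGen fun a b => κ b a ≠ 0

/-- The relation `≼` between the vectors `[y] = {y, V y}` and `[x] = {x, V x}` of a
combinatorial vector field: `[y] ≼ [x]` iff `[y] ∩ cl [x] ≠ ∅`, i.e. some cell of `[y]`
is `≤_κ` some cell of `[x]`. -/
def vectRel (κ : X → X → R) (V : X → X) : X → X → Prop :=
  fun y x => ∃ a, (a = y ∨ a = V y) ∧ ∃ b, (b = x ∨ b = V x) ∧ kle κ a b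

/-- The preorder `≤_𝒱` induced on vectors: reflexive-transitive closure of `≼`. -/
def vle (κ : X → X → R) (V : X → X) : X → X → Prop :=
  Relation.ReflTransGen (vectRel κ V)

lemma lmat_apply (m : X → X → R) (c : X → R) (y : X) :
    lmat m c y = ∑ x, c x * m x y := rfl

open Classical in
lemma gamma_apply (κ : X → X → R) (V : X → X) (d : X → R) (y : X) :
    gammaMap κ V d y = ∑ w, d w *
      (if V w ≠ w ∧ κ (V w) w ≠ 0 ∧ y = V w then -(Ring.inverse (κ (V w) w)) else 0) := rfl

lemma gamma_supp (κ : X → X → R) (V : X → X) (d : X → R) (y : X)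
    (h : gammaMap κ V d y ≠ 0) :
    ∃ w, d w ≠ 0 ∧ V w ≠ w ∧ κ (V w) w ≠ 0 ∧ y = V w := by
  classical
  rw [gamma_apply] at h
  obtain ⟨w, -, hw⟩ := Finset.exists_ne_zero_of_sum_ne_zero h
  refine ⟨w, left_ne_zero_of_mul hw, ?_⟩
  have h2 := right_ne_zero_of_mul hw
  by_contra hc
  rw [if_neg hc] at h2
  exact h2 rfl

lemma lmat_supp (m : X → X → R) (c : X → R) (y : X)
    (h : lmat m c y ≠ 0) : ∃ u, c u ≠ 0 ∧ m u y ≠ 0 := by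
  rw [lmat_apply] at h
  obtain ⟨u, -, hu⟩ := Finset.exists_ne_zero_of_sum_ne_zero h
  exact ⟨u, left_ne_zero_of_mul hu, right_ne_zero_of_mul hu⟩

lemma gamma_zero (κ : X → X → R) (V : X → X) (c : X → R)
    (hc : ∀ w, c w ≠ 0 → ¬(V w ≠ w ∧ κ (V w) w ≠ 0)) :
    gammaMap κ V c = 0 := by
  classical
  funext y
  rw [gamma_apply]
  refine Finset.sum_eq_zero fun w _ => ?_
  by_cases hw : c w = 0
  · simp [hw]
  · rw [if_neg fun hcond => hc w hw ⟨hcond.1, hcond.2.1⟩, mul_zero]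

/-- key general lemma -/
lemma key_gen (dim : X → ℕ) (κ : X → X → R)
    (hκ1 : ∀ x y : X, κ x y ≠ 0 → dim x = dim y + 1)
    (V : X → X) (hinv : ∀ x, V (V x) = x)
    (c : X → R) (hc : ∀ u, c u ≠ 0 → V u = u) (n : ℕ) :
    ∃ r : X → R, (flowMap κ V ^ n) c = c + r ∧
      ∀ z, r z ≠ 0 → (V z ≠ z ∧ κ z (V z) ≠ 0) ∧ ∃ u, c u ≠ 0 ∧ vle κ V z u := by
  -- heads have no "upward" coboundary
  have head_no_up : ∀ z : X, κ z (V z) ≠ 0 → κ (V z) z = 0 := by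
    intro z hz
    by_contra h
    have h1 := hκ1 z (V z) hz
    have h2 := hκ1 (V z) z h
    omega
  induction n with
  | zero =>
    refine ⟨0, by simp, fun z hz => absurd rfl hz⟩
  | succ n ih =>
    obtain ⟨r, hr, hsupp⟩ := ih
    have hgz : gammaMap κ V (c + r) = 0 := by
      refine gamma_zero κ V _ fun w hw hcond => ?_
      by_cases hcw : c w = 0
      · have hrw : r w ≠ 0 := by
          intro h0; apply hw; simp [Pi.add_apply, hcw, h0]
        obtain ⟨⟨hVw, hκw⟩, -⟩ := hsupp w hrw
        exact hcond.2 (head_no_up w hκw)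
      · exact hcond.1 (hc w hcw)
    have step : (flowMap κ V ^ (n+1)) c
        = c + (r + gammaMap κ V (lmat κ (c + r))) := by
      rw [pow_succ', Module.End.mul_apply, hr]
      show flowMap κ V (c + r) = _
      rw [flowMap]
      simp only [LinearMap.add_apply, LinearMap.comp_apply, LinearMap.id_apply, hgz,
        map_zero]
      abel
    refine ⟨r + gammaMap κ V (lmat κ (c + r)), step, fun z hz => ?_⟩
    by_cases hrz : r z = 0
    · have hgz2 : gammaMap κ V (lmat κ (c + r)) z ≠ 0 := by
        intro h0
        apply hz
        show r z + gammaMap κ V (lmat κ (c + r)) z = 0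
        rw [hrz, h0, add_zero]
      obtain ⟨w, hdw, hVw, hκw, hzw⟩ := gamma_supp κ V _ z hgz2
      obtain ⟨u, hu, hκu⟩ := lmat_supp κ (c + r) w hdw
      -- z = V w is a head
      have hVz : V z = w := by rw [hzw, hinv]
      have hzhead : V z ≠ z ∧ κ z (V z) ≠ 0 := by
        constructor
        · rw [hVz, hzw]; exact fun h => hVw h.symm
        · rw [hVz, hzw]; exact hκw
      refine ⟨hzhead, ?_⟩
      -- vle z w : vectRel (V w) w
      have hvzw : vectRel κ V z w := ⟨w, Or.inr (by rw [hVz]), w, Or.inl rfl,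
        Relation.ReflTransGen.refl⟩
      have hvwu : vectRel κ V w u := ⟨w, Or.inl rfl, u, Or.inl rfl,
        Relation.ReflTransGen.single hκu⟩
      by_cases hcu : c u = 0
      · have hru : r u ≠ 0 := by
          intro h0; apply hu; simp [Pi.add_apply, hcu, h0]
        obtain ⟨-, u', hu', hvu⟩ := hsupp u hru
        exact ⟨u', hu', Relation.ReflTransGen.head hvzw
          (Relation.ReflTransGen.head hvwu hvu)⟩
      · exact ⟨u, hcu, Relation.ReflTransGen.head hvzw
          (Relation.ReflTransGen.single hvwu)⟩
    · obtain ⟨hh, u, hu, hvu⟩ := hsupp z hrz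
      exact ⟨hh, u, hu, hvu⟩

/-- Let `(X,κ)` be a regular Lefschetz complex over a ring `R` and `𝒱` a gradient
combinatorial vector field on `X`, encoded by the involution `V` (gradient: the
relation `≤_𝒱` is antisymmetric on vectors).  Then for every critical cell `x`
(`V x = x`) and every `n ≥ 1` one has `Φⁿ x = x + rₙ` where the support of `rₙ`
consists of heads belonging to vectors strictly below `[x]` in `≤_𝒱`.  Consequently,
the restriction of `Φⁿ` to the chains supported on critical cells is injective. -/
theorem stmt_19 (dim : X → ℕ) (κ : X → X → R)
    (hκ1 : ∀ x y : X, κ x y ≠ 0 → dim x = dim y + 1)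
    (hκ2 : ∀ x z : X, ∑ y, κ x y * κ y z = 0)
    (hreg : ∀ x y : X, κ x y ≠ 0 → IsUnit (κ x y))
    (V : X → X) (hinv : ∀ x, V (V x) = x)
    (hvec : ∀ x : X, V x ≠ x → κ (V x) x ≠ 0 ∨ κ x (V x) ≠ 0)
    (hgrad : ∀ x y : X, vle κ V x y → vle κ V y x → (x = y ∨ x = V y)) :
    (∀ x : X, V x = x → ∀ n : ℕ, 1 ≤ n →
      ∃ r : X → R,
        (flowMap κ V ^ n) (Pi.single x 1) = Pi.single x 1 + r ∧
        ∀ z : X, r z ≠ 0 →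
          (V z ≠ z ∧ κ z (V z) ≠ 0) ∧ vle κ V z x ∧ z ≠ x ∧ z ≠ V x) ∧
    (∀ n : ℕ, 1 ≤ n → ∀ c₁ c₂ : X → R,
      (∀ x : X, c₁ x ≠ 0 → V x = x) → (∀ x : X, c₂ x ≠ 0 → V x = x) →
      (flowMap κ V ^ n) c₁ = (flowMap κ V ^ n) c₂ → c₁ = c₂) := by
  constructor
  · intro x hx n _
    have hc : ∀ u : X, (Pi.single x 1 : X → R) u ≠ 0 → V u = u := by
      intro u hu
      by_cases hux : u = x
      · rw [hux, hx]
      · exact absurd (Pi.single_eq_of_ne (M := fun _ => R) hux 1) hu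
    obtain ⟨r, hr, hsupp⟩ := key_gen dim κ hκ1 V hinv (Pi.single x 1) hc n
    refine ⟨r, hr, fun z hz => ?_⟩
    obtain ⟨hhead, u, hu, hvu⟩ := hsupp z hz
    have hux : u = x := by
      by_contra h
      exact hu (Pi.single_eq_of_ne (M := fun _ => R) h 1)
    have hzx : z ≠ x := fun h => hhead.1 (by rw [h, hx, ← h])
    exact ⟨hhead, hux ▸ hvu, hzx, by rw [hx]; exact hzx⟩
  · intro n _ c₁ c₂ h₁ h₂ heq
    obtain ⟨r₁, hr₁, hs₁⟩ := key_gen dim κ hκ1 V hinv c₁ h₁ n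
    obtain ⟨r₂, hr₂, hs₂⟩ := key_gen dim κ hκ1 V hinv c₂ h₂ n
    rw [hr₁, hr₂] at heq
    funext z
    by_cases hz : V z = z
    · have h1z : r₁ z = 0 := by
        by_contra h; exact ((hs₁ z h).1.1) hz
      have h2z : r₂ z = 0 := by
        by_contra h; exact ((hs₂ z h).1.1) hz
      have := congrFun heq z
      simpa [Pi.add_apply, h1z, h2z] using this
    · by_cases h1 : c₁ z = 0
      · by_cases h2 : c₂ z = 0
        · rw [h1, h2]
        · exact absurd (h₂ z h2) hz
      · exact absurd (h₁ z h1) hz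


end Lefschetz
end
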